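/- arXiv:1902.08612 — 2 statements merged into one kernel-verified Lean document; each statement's English description precedes it below -/
import Mathlib

section
/- Let L be a Lie algebra and H a subalgebra of L generated by finitely many elements h₁, ..., h_m such that every iterated Lie commutator in the generators h₁, ..., h_m is ad-nilpotent as an operator on L. If H is nilpotent, then there exists a positive integer u such that [L, H, H, ..., H] = 0 with H repeated u times, i.e., (ad H)^u annihilates L. -/
/-- Iterated Lie commutators (with arbitrary bracketing) in a set `S` of elements. -/
inductive IsLieCommWord {L : Type*} [LieRing L] (S : Set L) : L → Prop
  | base {x : L} (hx : x ∈ S) : IsLieCommWord S x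
  | bracket {x y : L} : IsLieCommWord S x → IsLieCommWord S y → IsLieCommWord S ⁅x, y⁆

/-- Iterated Lie commutator words, with their weight recorded. -/
inductive WtWord {L : Type*} [LieRing L] (S : Set L) : ℕ → L → Prop
  | base {x : L} (hx : x ∈ S) : WtWord S 1 x
  | br {p q : ℕ} {x y : L} : WtWord S p x → WtWord S q y → WtWord S (p + q) ⁅x, y⁆

theorem WtWord.one_le {L : Type*} [LieRing L] {S : Set L} {j : ℕ} {x : L}
    (h : WtWord S j x) : 1 ≤ j := by
  induction h with
  | base hx => exact le_refl 1
  | br hp hq ihp ihq => omega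

theorem WtWord.isLieCommWord {L : Type*} [LieRing L] {S : Set L} {j : ℕ} {x : L}
    (h : WtWord S j x) : IsLieCommWord S x := by
  induction h with
  | base hx => exact IsLieCommWord.base hx
  | br hp hq ihp ihq => exact IsLieCommWord.bracket ihp ihq

theorem WtWord.finite {L : Type*} [LieRing L] {S : Set L} (hS : S.Finite) :
    ∀ j : ℕ, {x : L | WtWord S j x}.Finite := by
  intro j
  induction j using Nat.strong_induction_on with
  | _ j ih =>
    have hsub : {x : L | WtWord S j x} ⊆
        S ∪ ⋃ p ∈ Finset.range j, ⋃ q ∈ Finset.range j,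
          Set.image2 (fun a b => ⁅a, b⁆) {x : L | WtWord S p x} {x : L | WtWord S q x} := by
      rintro x hx
      cases hx with
      | base hx => exact Or.inl hx
      | @br p q a b hp hq =>
        right
        have h1 : 1 ≤ p := hp.one_le
        have h2 : 1 ≤ q := hq.one_le
        simp only [Set.mem_iUnion]
        exact ⟨p, Finset.mem_range.mpr (by omega), q, Finset.mem_range.mpr (by omega),
          Set.mem_image2_of_mem hp hq⟩
    refine Set.Finite.subset (hS.union ?_) hsub
    refine Set.Finite.biUnion (Finset.range j).finite_toSet ?_
    intro p hp
    refine Set.Finite.biUnion (Finset.range j).finite_toSet ?_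
    intro q hq
    exact Set.Finite.image2 _ (ih p (Finset.mem_range.mp hp)) (ih q (Finset.mem_range.mp hq))

/-- Key step: collecting the occurrences of one nilpotent generator `a` in products. -/
theorem ring_insert {R A : Type*} [CommRing R] [Ring A] [Algebra R A]
    (k n c : ℕ) (hk : 1 ≤ k) (a : A) (han : a ^ n = 0)
    (Q : ℕ × A → Prop)
    (hQw : ∀ p, Q p → k ≤ p.1)
    (hQzero : ∀ p, Q p → c < p.1 → p.2 = 0)
    (hQcomm : ∀ p, Q p → p.2 * a - a * p.2 ∈
      Submodule.span R {x : A | ∃ j, p.1 + k ≤ j ∧ Q (j, x)})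
    (V' : ℕ)
    (hV' : ∀ l : List (ℕ × A), (∀ q ∈ l, Q q) → V' ≤ l.length → (l.map Prod.snd).prod = 0) :
    ∀ l : List (ℕ × A), (∀ q ∈ l, (q.1 = k ∧ q.2 = a) ∨ Q q) →
      n + c * V' ≤ l.length → (l.map Prod.snd).prod = 0 := by
  set N : ℕ → Submodule R A := fun W => Submodule.span R
    {x : A | ∃ (e : ℕ) (w : List (ℕ × A)), (∀ q ∈ w, Q q) ∧
      W ≤ e * k + (w.map Prod.fst).sum ∧ x = a ^ e * (w.map Prod.snd).prod} with hN
  have hNmono : ∀ {W W' : ℕ}, W' ≤ W → N W ≤ N W' := by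
    intro W W' hW
    apply Submodule.span_mono
    rintro x ⟨e, w, hw, hle, rfl⟩
    exact ⟨e, w, hw, le_trans hW hle, rfl⟩
  have hNa : ∀ (W : ℕ) (z : A), z ∈ N W → a * z ∈ N (W + k) := by
    intro W z hz
    induction hz using Submodule.span_induction with
    | mem x hx =>
      obtain ⟨e, w, hw, hle, rfl⟩ := hx
      refine Submodule.subset_span ⟨e + 1, w, hw, ?_, ?_⟩
      · have : (e + 1) * k = e * k + k := by ring
        omega
      · rw [pow_succ', mul_assoc]
    | zero => rw [mul_zero]; exact Submodule.zero_mem _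
    | add x y hx hy ihx ihy => rw [mul_add]; exact Submodule.add_mem _ ihx ihy
    | smul r x hx ihx => rw [mul_smul_comm]; exact Submodule.smul_mem _ _ ihx
  have hD : ∀ (e j : ℕ) (g : A), Q (j, g) → g * a ^ e ∈ N (e * k + j) := by
    intro e
    induction e with
    | zero =>
      intro j g hg
      refine Submodule.subset_span ⟨0, [(j, g)], by simpa using hg, by simp, by simp⟩
    | succ e ih =>
      intro j g hg
      have key : g * a ^ (e + 1) = a * (g * a ^ e) + (g * a - a * g) * a ^ e := by
        rw [pow_succ']; noncomm_ring
      rw [key]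
      refine Submodule.add_mem _ ?_ ?_
      · have h1 := hNa _ _ (ih j g hg)
        refine hNmono ?_ h1
        have : (e + 1) * k = e * k + k := by ring
        omega
      · have hsp := hQcomm (j, g) hg
        have : ∀ z ∈ Submodule.span R {x : A | ∃ j', (j, g).1 + k ≤ j' ∧ Q (j', x)},
            z * a ^ e ∈ N ((e + 1) * k + j) := by
          intro z hz
          induction hz using Submodule.span_induction with
          | mem b hb =>
            obtain ⟨j', hj', hQ'⟩ := hb
            refine hNmono ?_ (ih j' b hQ')
            have : (e + 1) * k = e * k + k := by ring
            simp only [Prod.fst] at hj'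
            omega
          | zero => rw [zero_mul]; exact Submodule.zero_mem _
          | add x y hx hy ihx ihy => rw [add_mul x y (a ^ e)]; exact Submodule.add_mem _ ihx ihy
          | smul r x hx ihx => rw [smul_mul_assoc]; exact Submodule.smul_mem _ _ ihx
        exact this _ hsp
  have hE : ∀ (W : ℕ) (z : A), z ∈ N W → ∀ w : List (ℕ × A), (∀ q ∈ w, Q q) →
      z * (w.map Prod.snd).prod ∈ N (W + (w.map Prod.fst).sum) := by
    intro W z hz
    induction hz using Submodule.span_induction with
    | mem x hx =>
      intro w hw
      obtain ⟨e, w', hw', hle, rfl⟩ := hx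
      refine Submodule.subset_span ⟨e, w' ++ w, ?_, ?_, ?_⟩
      · intro q hq
        rcases List.mem_append.mp hq with h | h
        · exact hw' q h
        · exact hw q h
      · rw [List.map_append, List.sum_append]; omega
      · rw [List.map_append, List.prod_append, mul_assoc]
    | zero => intro w hw; rw [zero_mul]; exact Submodule.zero_mem _
    | add x y hx hy ihx ihy =>
      intro w hw; rw [add_mul]; exact Submodule.add_mem _ (ihx w hw) (ihy w hw)
    | smul r x hx ihx =>
      intro w hw; rw [smul_mul_assoc]; exact Submodule.smul_mem _ _ (ihx w hw)
  have hG : ∀ (j : ℕ) (g : A), Q (j, g) → ∀ (W : ℕ) (z : A), z ∈ N W →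
      g * z ∈ N (W + j) := by
    intro j g hg W z hz
    induction hz using Submodule.span_induction with
    | mem x hx =>
      obtain ⟨e, w, hw, hle, rfl⟩ := hx
      rw [← mul_assoc]
      have h1 := hE _ _ (hD e j g hg) w hw
      refine hNmono ?_ h1
      omega
    | zero => rw [mul_zero]; exact Submodule.zero_mem _
    | add x y hx hy ihx ihy => rw [mul_add]; exact Submodule.add_mem _ ihx ihy
    | smul r x hx ihx => rw [mul_smul_comm]; exact Submodule.smul_mem _ _ ihx
  have hC : ∀ l : List (ℕ × A), (∀ q ∈ l, (q.1 = k ∧ q.2 = a) ∨ Q q) →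
      (l.map Prod.snd).prod ∈ N ((l.map Prod.fst).sum) := by
    intro l
    induction l with
    | nil =>
      intro _
      exact Submodule.subset_span ⟨0, [], by simp, by simp, by simp⟩
    | cons x l ih =>
      intro hl
      have hx := hl x List.mem_cons_self
      have ihl := ih (fun q hq => hl q (List.mem_cons_of_mem _ hq))
      simp only [List.map_cons, List.prod_cons, List.sum_cons]
      rcases hx with ⟨h1, h2⟩ | hQ
      · rw [h2]
        have := hNa _ _ ihl
        refine hNmono ?_ this
        omega
      · have := hG x.1 x.2 hQ _ _ ihl
        refine hNmono ?_ this
        omega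
  intro l hl hlen
  have hmem := hC l hl
  have hwl : k * l.length ≤ (l.map Prod.fst).sum := by
    have h1 : ((l.map fun _ => k).sum : ℕ) ≤ (l.map Prod.fst).sum := by
      apply List.sum_le_sum
      intro q hq
      rcases hl q hq with ⟨h1, _⟩ | hQ
      · omega
      · exact hQw q hQ
    simpa [Nat.mul_comm] using h1
  have hbot : N ((l.map Prod.fst).sum) ≤ ⊥ := by
    rw [hN]
    rw [Submodule.span_le]
    rintro x ⟨e, w, hw, hle, rfl⟩
    simp only [SetLike.mem_coe, Submodule.mem_bot]
    by_cases hlw : V' ≤ w.length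
    · rw [hV' w hw hlw, mul_zero]
    · push_neg at hlw
      by_cases hbig : ∃ q ∈ w, c < q.1
      · obtain ⟨q, hqw, hqc⟩ := hbig
        have hq0 : q.2 = 0 := hQzero q (hw q hqw) hqc
        have : (0 : A) ∈ w.map Prod.snd := by
          rw [← hq0]; exact List.mem_map_of_mem hqw
        rw [List.prod_eq_zero this, mul_zero]
      · push_neg at hbig
        have hsw : (w.map Prod.fst).sum ≤ c * w.length := by
          have h1 : ((w.map Prod.fst).sum : ℕ) ≤ (w.map fun _ => c).sum := by
            apply List.sum_le_sum
            intro q hq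
            exact hbig q hq
          simpa [Nat.mul_comm] using h1
        have hne : n ≤ e := by
          have t0 : w.length + 1 ≤ V' := hlw
          have t1 : c * w.length + c ≤ c * V' := by
            have := Nat.mul_le_mul_left c t0
            rw [Nat.mul_add, Nat.mul_one] at this
            exact this
          have t2 : c * V' ≤ k * (c * V') := Nat.le_mul_of_pos_left _ hk
          have t3 : k * (n + c * V') ≤ k * l.length := Nat.mul_le_mul_left k hlen
          have t4 : k * (n + c * V') ≤ e * k + c * w.length := by
            calc k * (n + c * V') ≤ k * l.length := t3
              _ ≤ (l.map Prod.fst).sum := hwl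
              _ ≤ e * k + (w.map Prod.fst).sum := hle
              _ ≤ e * k + c * w.length := by omega
          have t5 : k * n + c * w.length + c ≤ e * k + c * w.length := by
            have : k * (n + c * V') = k * n + k * (c * V') := by ring
            omega
          have t6 : k * n ≤ k * e := by
            have : e * k = k * e := Nat.mul_comm e k
            omega
          exact Nat.le_of_mul_le_mul_left t6 hk
        rw [pow_eq_zero_of_le hne han, zero_mul]
  have := hbot hmem
  simpa using this

/-- Products of elements taken from a graded family of nilpotent elements whose commutators
raise the grading eventually vanish. -/
theorem ring_key {R A : Type*} [CommRing R] [Ring A] [Algebra R A]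
    (c : ℕ) (S : ℕ → Set A)
    (hfin : ∀ j, (S j).Finite)
    (hzero : ∀ j, c < j → ∀ a ∈ S j, a = 0)
    (hnilp : ∀ j, ∀ a ∈ S j, ∃ n, a ^ n = 0)
    (hcomm : ∀ p q a b, a ∈ S p → b ∈ S q →
       a * b - b * a ∈ Submodule.span R {x : A | ∃ j, p + q ≤ j ∧ x ∈ S j}) :
    ∃ U : ℕ, ∀ t : List A, (∀ x ∈ t, ∃ j, 1 ≤ j ∧ x ∈ S j) → U ≤ t.length →
      t.prod = 0 := by
  have P : ∀ (d k : ℕ), k + d = c + 1 → 1 ≤ k → ∃ U : ℕ, ∀ l : List (ℕ × A),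
      (∀ q ∈ l, k ≤ q.1 ∧ q.2 ∈ S q.1) → U ≤ l.length → (l.map Prod.snd).prod = 0 := by
    intro d
    induction d with
    | zero =>
      intro k hkc _
      refine ⟨1, fun l hl hlen => ?_⟩
      cases l with
      | nil => simp at hlen
      | cons q l =>
        have hq := hl q List.mem_cons_self
        have h0 : q.2 = 0 := hzero q.1 (by omega) q.2 hq.2
        simp [h0]
    | succ d ih =>
      intro k hkc hk1
      obtain ⟨U1, hU1⟩ := ih (k + 1) (by omega) (by omega)
      have inner : ∀ F : Set A, F.Finite → (F ⊆ S k → ∃ V : ℕ, ∀ l : List (ℕ × A),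
          (∀ q ∈ l, (q.1 = k ∧ q.2 ∈ F) ∨ (k + 1 ≤ q.1 ∧ q.2 ∈ S q.1)) →
          V ≤ l.length → (l.map Prod.snd).prod = 0) := by
        intro F hF
        refine Set.Finite.induction_on
          (motive := fun F _ => F ⊆ S k → ∃ V : ℕ, ∀ l : List (ℕ × A),
            (∀ q ∈ l, (q.1 = k ∧ q.2 ∈ F) ∨ (k + 1 ≤ q.1 ∧ q.2 ∈ S q.1)) →
            V ≤ l.length → (l.map Prod.snd).prod = 0) F hF ?_ ?_
        · intro _
          refine ⟨U1, fun l hl hlen => ?_⟩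
          refine hU1 l (fun q hq => ?_) hlen
          rcases hl q hq with ⟨_, h⟩ | h
          · exact absurd h (Set.notMem_empty _)
          · exact h
        · rintro a F' ha hF' ihF hsub
          have hsubF' : F' ⊆ S k := fun x hx => hsub (Set.mem_insert_of_mem _ hx)
          have haS : a ∈ S k := hsub (Set.mem_insert _ _)
          obtain ⟨V', hV'⟩ := ihF hsubF'
          obtain ⟨n, hn⟩ := hnilp k a haS
          set Q : ℕ × A → Prop :=
            fun q => (q.1 = k ∧ q.2 ∈ F') ∨ (k + 1 ≤ q.1 ∧ q.2 ∈ S q.1) with hQ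
          have hQS : ∀ q, Q q → q.2 ∈ S q.1 := by
            rintro q (⟨h1, h2⟩ | ⟨h1, h2⟩)
            · rw [h1]; exact hsubF' h2
            · exact h2
          have key := ring_insert (R := R) k n c (by omega) a hn Q
            (fun q hq => by rcases hq with ⟨h1, _⟩ | ⟨h1, _⟩ <;> omega)
            (fun q hq hc => by
              exact hzero q.1 hc q.2 (hQS q hq))
            (fun q hq => by
              have hmem := hcomm q.1 k q.2 a (hQS q hq) haS
              refine Submodule.span_le.mpr ?_ hmem
              rintro x ⟨j, hj, hx⟩
              have hq1 : k ≤ q.1 := by rcases hq with ⟨h1, _⟩ | ⟨h1, _⟩ <;> omega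
              refine Submodule.subset_span ⟨j, hj, Or.inr ⟨by omega, hx⟩⟩)
            V' hV'
          refine ⟨n + c * V', fun l hl hlen => ?_⟩
          refine key l (fun q hq => ?_) hlen
          rcases hl q hq with ⟨h1, h2⟩ | h
          · rcases Set.mem_insert_iff.mp h2 with h3 | h3
            · exact Or.inl ⟨h1, h3⟩
            · exact Or.inr (Or.inl ⟨h1, h3⟩)
          · exact Or.inr (Or.inr h)
      obtain ⟨V, hV⟩ := inner (S k) (hfin k) (subset_refl _)
      refine ⟨V, fun l hl hlen => ?_⟩
      refine hV l (fun q hq => ?_) hlen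
      obtain ⟨h1, h2⟩ := hl q hq
      by_cases hqk : q.1 = k
      · exact Or.inl ⟨hqk, hqk ▸ h2⟩
      · exact Or.inr ⟨by omega, h2⟩
  obtain ⟨U, hU⟩ := P c 1 (by omega) (le_refl 1)
  refine ⟨U, fun t ht hlen => ?_⟩
  classical
  set f : A → ℕ × A := fun x => (if h : ∃ j, 1 ≤ j ∧ x ∈ S j then h.choose else 0, x) with hf
  have hsnd : (t.map f).map Prod.snd = t := by
    rw [List.map_map]
    have : Prod.snd ∘ f = id := by funext x; simp [hf]
    rw [this, List.map_id]
  have hok : ∀ q ∈ t.map f, 1 ≤ q.1 ∧ q.2 ∈ S q.1 := by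
    intro q hq
    obtain ⟨x, hx, rfl⟩ := List.mem_map.mp hq
    have hj := ht x hx
    simp only [hf, hj, dif_pos]
    exact ⟨hj.choose_spec.1, hj.choose_spec.2⟩
  have := hU (t.map f) hok (by rwa [List.length_map])
  rwa [hsnd] at this

theorem foldl_bracket_eq {R L : Type*} [CommRing R] [LieRing L] [LieAlgebra R L]
    (l : List L) (x : L) :
    l.foldl (fun acc w => ⁅acc, w⁆) x
      = ((l.reverse.map fun w => -(LieAlgebra.ad R L w : Module.End R L)).prod) x := by
  induction l generalizing x with
  | nil => simp
  | cons a l ih =>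
    rw [List.foldl_cons, ih, List.reverse_cons, List.map_append, List.prod_append]
    simp only [List.map_cons, List.map_nil, List.prod_cons, List.prod_nil, mul_one,
      Module.End.mul_apply, LinearMap.neg_apply, LieAlgebra.ad_apply, lie_skew]

theorem lie_mem_span_of_bracket_closed {R L : Type*} [CommRing R] [LieRing L] [LieAlgebra R L]
    (s : Set L) (hs : ∀ x ∈ s, ∀ y ∈ s, ⁅x, y⁆ ∈ s) :
    ∀ x ∈ Submodule.span R s, ∀ y ∈ Submodule.span R s, ⁅x, y⁆ ∈ Submodule.span R s := by
  intro x hx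
  induction hx using Submodule.span_induction with
  | mem x hxs =>
    intro y hy
    induction hy using Submodule.span_induction with
    | mem y hys => exact Submodule.subset_span (hs _ hxs _ hys)
    | zero => rw [lie_zero]; exact Submodule.zero_mem _
    | add y z hy hz ihy ihz => rw [lie_add]; exact Submodule.add_mem _ ihy ihz
    | smul r y hy ihy => rw [lie_smul]; exact Submodule.smul_mem _ _ ihy
  | zero => intro y hy; rw [zero_lie]; exact Submodule.zero_mem _
  | add x z hx hz ihx ihz =>
    intro y hy; rw [add_lie]; exact Submodule.add_mem _ (ihx y hy) (ihz y hy)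
  | smul r x hx ihx =>
    intro y hy; rw [smul_lie]; exact Submodule.smul_mem _ _ (ihx y hy)

theorem prod_mem_span_prods {R A : Type*} [CommRing R] [Ring A] [Algebra R A] (T : Set A) :
    ∀ lst : List A, (∀ z ∈ lst, z ∈ Submodule.span R T) →
      lst.prod ∈ Submodule.span R
        {p : A | ∃ t : List A, t.length = lst.length ∧ (∀ x ∈ t, x ∈ T) ∧ p = t.prod} := by
  intro lst
  induction lst with
  | nil =>
    intro _
    exact Submodule.subset_span ⟨[], rfl, by simp, by simp⟩
  | cons z lst ih =>
    intro hz
    rw [List.prod_cons]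
    have hz0 : z ∈ Submodule.span R T := hz z List.mem_cons_self
    have hrest := ih (fun w hw => hz w (List.mem_cons_of_mem _ hw))
    clear hz ih
    have key : ∀ z' ∈ Submodule.span R T, ∀ w ∈ Submodule.span R
        {p : A | ∃ t : List A, t.length = lst.length ∧ (∀ x ∈ t, x ∈ T) ∧ p = t.prod},
        z' * w ∈ Submodule.span R
        {p : A | ∃ t : List A, t.length = lst.length + 1 ∧ (∀ x ∈ t, x ∈ T) ∧ p = t.prod} := by
      intro z' hz'
      induction hz' using Submodule.span_induction with
      | mem z0 hz0 =>
        intro w hw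
        induction hw using Submodule.span_induction with
        | mem p hp =>
          obtain ⟨t, hlen, ht, rfl⟩ := hp
          refine Submodule.subset_span ⟨z0 :: t, by simp [hlen], ?_, by rw [List.prod_cons]⟩
          intro x hx
          rcases List.mem_cons.mp hx with rfl | hx
          · exact hz0
          · exact ht x hx
        | zero => rw [mul_zero]; exact Submodule.zero_mem _
        | add p q hp hq ihp ihq => rw [mul_add]; exact Submodule.add_mem _ ihp ihq
        | smul r p hp ihp => rw [mul_smul_comm]; exact Submodule.smul_mem _ _ ihp
      | zero => intro w hw; rw [zero_mul]; exact Submodule.zero_mem _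
      | add p q hp hq ihp ihq =>
        intro w hw; rw [add_mul]; exact Submodule.add_mem _ (ihp w hw) (ihq w hw)
      | smul r p hp ihp =>
        intro w hw; rw [smul_mul_assoc]; exact Submodule.smul_mem _ _ (ihp w hw)
    have := key z hz0 _ hrest
    simpa using this

theorem wtword_mem_lcs {R L : Type*} [CommRing R] [LieRing L] [LieAlgebra R L]
    {m : ℕ} (h : Fin m → L) (H : LieSubalgebra R L)
    (hgen : H = LieSubalgebra.lieSpan R L (Set.range h)) :
    ∀ {j : ℕ} {x : L}, WtWord (Set.range h) j x → ∀ k : ℕ, 2 ^ k ≤ j →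
      ∃ y : H, (y : L) = x ∧ y ∈ LieModule.lowerCentralSeries R H H k := by
  intro j x hx
  induction hx with
  | @base x hxs =>
    intro k hk
    have hk0 : k = 0 := by
      by_contra hne
      have := Nat.one_lt_two_pow_iff.mpr hne
      omega
    subst hk0
    have hxH : x ∈ H := by rw [hgen]; exact LieSubalgebra.subset_lieSpan hxs
    exact ⟨⟨x, hxH⟩, rfl, LieSubmodule.mem_top _⟩
  | @br p q xp xq hp hq ihp ihq =>
    intro k hk
    match k with
    | 0 =>
      obtain ⟨yp, hyp, _⟩ := ihp 0 (by simpa using hp.one_le)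
      obtain ⟨yq, hyq, _⟩ := ihq 0 (by simpa using hq.one_le)
      exact ⟨⁅yp, yq⁆, by rw [LieSubalgebra.coe_bracket, hyp, hyq], LieSubmodule.mem_top _⟩
    | (k + 1) =>
      have h2 : 2 ^ (k + 1) = 2 ^ k + 2 ^ k := by rw [pow_succ]; ring
      by_cases hcase : 2 ^ k ≤ p
      · obtain ⟨yp, hyp, hmp⟩ := ihp k hcase
        obtain ⟨yq, hyq, _⟩ := ihq 0 (by simpa using hq.one_le)
        refine ⟨⁅yp, yq⁆, by rw [LieSubalgebra.coe_bracket, hyp, hyq], ?_⟩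
        rw [LieModule.lowerCentralSeries_succ]
        have hb : ⁅yq, yp⁆ ∈ ⁅(⊤ : LieIdeal R H), LieModule.lowerCentralSeries R H H k⁆ :=
          LieSubmodule.lie_mem_lie (LieSubmodule.mem_top _) hmp
        have heq : ⁅yp, yq⁆ = -⁅yq, yp⁆ := (lie_skew yp yq).symm
        rw [heq]
        exact neg_mem hb
      · have hcq : 2 ^ k ≤ q := by omega
        obtain ⟨yp, hyp, _⟩ := ihp 0 (by simpa using hp.one_le)
        obtain ⟨yq, hyq, hmq⟩ := ihq k hcq
        refine ⟨⁅yp, yq⁆, by rw [LieSubalgebra.coe_bracket, hyp, hyq], ?_⟩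
        rw [LieModule.lowerCentralSeries_succ]
        exact LieSubmodule.lie_mem_lie (LieSubmodule.mem_top _) hmq

set_option maxRecDepth 8000
/-- If a Lie subalgebra `H` of `L` is generated by finitely many elements all of whose
iterated commutators are ad-nilpotent on `L`, and `H` is nilpotent, then
`[L, H, …, H] = 0` for some number `u` of copies of `H`. -/
theorem stmt6 {R L : Type*} [CommRing R] [LieRing L] [LieAlgebra R L]
    (m : ℕ) (h : Fin m → L) (H : LieSubalgebra R L)
    (hgen : H = LieSubalgebra.lieSpan R L (Set.range h))
    (had : ∀ x : L, IsLieCommWord (Set.range h) x → ∃ n : ℕ, (LieAlgebra.ad R L x) ^ n = 0)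
    (hnil : LieRing.IsNilpotent H) :
    ∃ u : ℕ, 0 < u ∧ ∀ (x : L) (y : ℕ → L), (∀ i, y i ∈ H) →
      (List.range u).foldl (fun acc i => ⁅acc, y i⁆) x = 0 := by
  classical
  obtain ⟨c0, hc0⟩ := (LieModule.isNilpotent_iff R H H).mp hnil
  set c : ℕ := 2 ^ c0 with hc
  set B : L → Module.End R L := fun w => -(LieAlgebra.ad R L w) with hB
  set S : ℕ → Set (Module.End R L) := fun j => B '' {x : L | WtWord (Set.range h) j x} with hS
  -- verify the hypotheses of `ring_key`
  have hfin' : ∀ j, (S j).Finite := fun j =>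
    (WtWord.finite (Set.finite_range h) j).image _
  have hzero' : ∀ j, c < j → ∀ a ∈ S j, a = 0 := by
    rintro j hj a ⟨x, hx, rfl⟩
    obtain ⟨y, hyx, hy⟩ := wtword_mem_lcs h H hgen hx c0 (by omega)
    rw [hc0] at hy
    have hy0 : y = 0 := by simpa using hy
    have hx0 : x = 0 := by rw [← hyx, hy0]; simp
    rw [hB]
    simp [hx0]
  have hnilp' : ∀ j, ∀ a ∈ S j, ∃ n, a ^ n = 0 := by
    rintro j a ⟨x, hx, rfl⟩
    obtain ⟨n, hn⟩ := had x hx.isLieCommWord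
    refine ⟨n, ?_⟩
    show (-(LieAlgebra.ad R L x)) ^ n = 0
    rw [neg_pow, hn, mul_zero]
  have hcomm' : ∀ p q a b, a ∈ S p → b ∈ S q →
      a * b - b * a ∈
        Submodule.span R {x : Module.End R L | ∃ j, p + q ≤ j ∧ x ∈ S j} := by
    rintro p q a b ⟨xa, hxa, rfl⟩ ⟨xb, hxb, rfl⟩
    have heq : B xa * B xb - B xb * B xa = B ⁅xb, xa⁆ := by
      have h1 : (LieAlgebra.ad R L) ⁅xb, xa⁆
          = LieAlgebra.ad R L xb * LieAlgebra.ad R L xa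
            - LieAlgebra.ad R L xa * LieAlgebra.ad R L xb := by
        ext z; simp only [LieAlgebra.ad_apply, LinearMap.sub_apply, Module.End.mul_apply]
        exact lie_lie _ _ _
      rw [hB]
      simp only
      rw [h1]
      noncomm_ring
    rw [heq]
    exact Submodule.subset_span ⟨q + p, by omega, ⟨⁅xb, xa⁆, WtWord.br hxb hxa, rfl⟩⟩
  obtain ⟨U, hU⟩ := ring_key (R := R) c S hfin' hzero' hnilp' hcomm'
  refine ⟨max U 1, lt_of_lt_of_le Nat.zero_lt_one (le_max_right _ _), ?_⟩
  intro x y hy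
  -- every element of `H` is an `R`-linear combination of commutator words
  set wordSet : Set L := {z : L | ∃ j, WtWord (Set.range h) j z} with hws
  have hcl : ∀ a ∈ wordSet, ∀ b ∈ wordSet, ⁅a, b⁆ ∈ wordSet := by
    rintro a ⟨ja, hja⟩ b ⟨jb, hjb⟩
    exact ⟨ja + jb, WtWord.br hja hjb⟩
  set K : LieSubalgebra R L :=
    { toSubmodule := Submodule.span R wordSet
      lie_mem' := fun {a b} hx hy => lie_mem_span_of_bracket_closed wordSet hcl a hx b hy } with hK
  have hHK : H ≤ K := by
    rw [hgen]
    refine LieSubalgebra.lieSpan_le.mpr ?_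
    rintro z ⟨i, rfl⟩
    exact Submodule.subset_span ⟨1, WtWord.base ⟨i, rfl⟩⟩
  have hyspan : ∀ i, y i ∈ Submodule.span R wordSet := by
    intro i
    have := hHK (hy i)
    rwa [← LieSubalgebra.mem_toSubmodule] at this
  -- pushing into the endomorphism algebra
  set Blin : L →ₗ[R] Module.End R L :=
    (letI := LieRing.ofAssociativeRing (A := Module.End R L); -(LieAlgebra.ad R L).toLinearMap) with hBlin
  set T : Set (Module.End R L) := {z : Module.End R L | ∃ j, 1 ≤ j ∧ z ∈ S j} with hT
  have hBy : ∀ i, B (y i) ∈ Submodule.span R T := by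
    intro i
    have h1 : Blin (y i) ∈ Submodule.map Blin (Submodule.span R wordSet) :=
      Submodule.mem_map_of_mem (hyspan i)
    rw [Submodule.map_span] at h1
    have h2 : Blin '' wordSet ⊆ T := by
      rintro z ⟨w, ⟨j, hw⟩, rfl⟩
      exact ⟨j, hw.one_le, ⟨w, hw, by simp [hBlin, hB]⟩⟩
    have h3 := Submodule.span_mono h2 h1
    have : Blin (y i) = B (y i) := by simp [hBlin, hB]
    rwa [this] at h3
  -- the product of the corresponding endomorphisms vanishes
  set lst : List (Module.End R L) := ((List.range (max U 1)).map y).reverse.map B with hlst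
  have hlen : lst.length = max U 1 := by simp [hlst]
  have hmemT : ∀ z ∈ lst, z ∈ Submodule.span R T := by
    intro z hz
    obtain ⟨w, hw, rfl⟩ := List.mem_map.mp hz
    rw [List.mem_reverse] at hw
    obtain ⟨i, _, rfl⟩ := List.mem_map.mp hw
    exact hBy i
  have hprod := prod_mem_span_prods T lst hmemT
  have hprod0 : lst.prod = 0 := by
    have hb : Submodule.span R
        {p : Module.End R L | ∃ t : List (Module.End R L),
          t.length = lst.length ∧ (∀ x ∈ t, x ∈ T) ∧ p = t.prod} ≤ ⊥ := by
      rw [Submodule.span_le]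
      rintro p ⟨t, htlen, htT, rfl⟩
      simp only [SetLike.mem_coe, Submodule.mem_bot]
      refine hU t (fun z hz => htT z hz) ?_
      rw [htlen, hlen]
      exact le_max_left _ _
    simpa using hb hprod
  -- translate back to iterated brackets
  have hfold := foldl_bracket_eq (R := R) ((List.range (max U 1)).map y) x
  have hfold2 : (List.range (max U 1)).foldl (fun acc i => ⁅acc, y i⁆) x
      = ((List.range (max U 1)).map y).foldl (fun acc w => ⁅acc, w⁆) x := by
    rw [List.foldl_map]
  rw [hfold2, hfold]
  have : ((List.range (max U 1)).map y).reverse.map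
      (fun w => -(LieAlgebra.ad R L w : Module.End R L)) = lst := by
    rw [hlst, hB]
  rw [this, hprod0]
  simp
end

section
/- Let G be a group with an N_p-series G = G₁ ≥ G₂ ≥ ⋯ (so [G_i, G_j] ≤ G_{i+j} and G_i^p ≤ G_{pi} for all i, j), and let L*(G) be the associated graded Lie ring over F_p. For x ∈ G, let x* denote the image of x in the homogeneous component G_i/G_{i+1} where i is maximal with x ∈ G_i. Then (ad x*)^p = ad((x^p)*) in L*(G). In particular, if x has finite order t, then x* is ad-nilpotent of index at most t. -/
open scoped commutatorElement

/-- Iterated (left) Engel commutator. -/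
def engel {G : Type*} [Group G] (g x : G) : ℕ → G
  | 0 => g
  | n + 1 => ⁅engel g x n, x⁆

section Abstract

variable {Γ : Type*} [Group Γ]

/-- One-step (left) difference of a sequence. -/
def dF (g : ℕ → Γ) : ℕ → Γ := fun n => g (n + 1) * (g n)⁻¹

/-- Certified polynomial sequences with respect to the filtration `U`,
distinguished element `χ` and step `ι`. -/
inductive Cc (U : ℕ → Subgroup Γ) (χ : Γ) (ι : ℕ) : ℕ → (ℕ → Γ) → Prop
  | const {ℓ : ℕ} {c : Γ} (hc : c ∈ U ℓ) : Cc U χ ι ℓ (fun _ => c)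
  | xpow : Cc U χ ι 0 (fun n => χ ^ n)
  | mul {ℓ : ℕ} {g h : ℕ → Γ} (hg : Cc U χ ι ℓ g) (hh : Cc U χ ι ℓ h) :
      Cc U χ ι ℓ (fun n => g n * h n)
  | inv {ℓ : ℕ} {g : ℕ → Γ} (hg : Cc U χ ι ℓ g) : Cc U χ ι ℓ (fun n => (g n)⁻¹)
  | comm {a b : ℕ} {g h : ℕ → Γ} (hg : Cc U χ ι a g) (hh : Cc U χ ι b h) :
      Cc U χ ι (a + b) (fun n => ⁅g n, h n⁆)
  | conj {a ℓ : ℕ} {g h : ℕ → Γ} (hg : Cc U χ ι a g) (hh : Cc U χ ι ℓ h) :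
      Cc U χ ι ℓ (fun n => g n * h n * (g n)⁻¹)
  | shift {ℓ : ℕ} {g : ℕ → Γ} (hg : Cc U χ ι ℓ g) : Cc U χ ι ℓ (fun n => g (n + 1))
  | mono {ℓ ℓ' : ℕ} {g : ℕ → Γ} (hg : Cc U χ ι ℓ' g) (hle : ℓ ≤ ℓ') : Cc U χ ι ℓ g
  | binom {ℓ dd : ℕ} {v : Γ} (hv : v ∈ U (ℓ + dd * ι)) :
      Cc U χ ι ℓ (fun n => v ^ (n.choose dd))
  | ext {ℓ : ℕ} {g h : ℕ → Γ} (hg : Cc U χ ι ℓ g) (he : ∀ n, g n = h n) : Cc U χ ι ℓ h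

variable {U : ℕ → Subgroup Γ} {χ : Γ} {ι : ℕ}

/-- Values of a certified level-`ℓ` sequence lie in `U ℓ`. -/
theorem Cc.val (hanti : ∀ {a b : ℕ}, a ≤ b → U b ≤ U a)
    (hcommU : ∀ {a b : ℕ} {z w : Γ}, z ∈ U a → w ∈ U b → ⁅z, w⁆ ∈ U (a + b))
    (hnormU : ∀ {a : ℕ} {z : Γ} (q : Γ), z ∈ U a → q * z * q⁻¹ ∈ U a)
    (hU0 : ∀ z : Γ, z ∈ U 0)
    {ℓ : ℕ} {g : ℕ → Γ} (h : Cc U χ ι ℓ g) : ∀ n, g n ∈ U ℓ := by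
  induction h with
  | const hc => exact fun _ => hc
  | xpow => exact fun n => hU0 _
  | mul hg hh ihg ihh => exact fun n => mul_mem (ihg n) (ihh n)
  | inv hg ihg => exact fun n => inv_mem (ihg n)
  | comm hg hh ihg ihh => exact fun n => hcommU (ihg n) (ihh n)
  | conj hg hh ihg ihh => exact fun n => hnormU _ (ihh n)
  | shift hg ihg => exact fun n => ihg (n + 1)
  | mono hg hle ihg => exact fun n => hanti hle (ihg n)
  | binom hv => exact fun n => pow_mem (hanti (Nat.le_add_right _ _) hv) _
  | ext hg he ihg => exact fun n => he n ▸ ihg n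

/-- Derivative of a certified sequence is certified one step deeper. -/
theorem Cc.derive (hχ : χ ∈ U ι) {ℓ : ℕ} {g : ℕ → Γ} (h : Cc U χ ι ℓ g) :
    Cc U χ ι (ℓ + ι) (dF g) := by
  induction h with
  | @const ℓ c hc =>
      exact Cc.ext (Cc.const (one_mem _)) (fun n => by simp [_root_.dF])
  | xpow =>
      refine Cc.ext (Cc.const (by simpa using hχ)) (fun n => ?_)
      simp [_root_.dF, pow_succ']
  | @mul ℓ g h hg hh ihg ihh =>
      refine Cc.ext (Cc.mul (Cc.conj (Cc.shift hg) ihh) ihg) (fun n => ?_)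
      simp only [_root_.dF]
      group
  | @inv ℓ g hg ihg =>
      refine Cc.ext (Cc.conj (Cc.inv (Cc.shift hg)) (Cc.inv ihg)) (fun n => ?_)
      simp only [_root_.dF]
      group
  | @comm a b g h hg hh ihg ihh =>
      refine Cc.ext (Cc.mul (Cc.mul
        (Cc.mono (Cc.conj ihg (Cc.comm hg ihh)) (by omega))
        (Cc.mono (Cc.comm (Cc.mul (Cc.mono ihg (Nat.le_add_left _ _))
            (Cc.mono ihh (Nat.le_add_left _ _))) (Cc.comm hg hh))
          (by omega)))
        (Cc.conj (Cc.comm hg hh)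
          (Cc.mul (Cc.mono (Cc.comm ihg ihh) (by omega))
            (Cc.mono (Cc.conj ihh (Cc.mono (Cc.comm ihg hh) (le_refl _)))
              (by omega))))) (fun n => ?_)
      simp only [_root_.dF]
      group
  | @conj a ℓ g h hg hh ihg ihh =>
      refine Cc.ext (Cc.conj (Cc.shift hg)
        (Cc.mul ihh
          (Cc.mono (Cc.comm hh (Cc.conj (Cc.inv (Cc.shift hg)) (Cc.inv ihg)))
            (by omega)))) (fun n => ?_)
      simp only [_root_.dF]
      group
  | @shift ℓ g hg ihg =>
      exact Cc.ext (Cc.shift ihg) (fun n => rfl)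
  | @mono ℓ ℓ' g hg hle ihg =>
      exact Cc.mono ihg (by omega)
  | @binom ℓ dd v hv =>
      match dd with
      | 0 =>
          refine Cc.ext (Cc.const (one_mem _)) (fun n => ?_)
          simp [_root_.dF]
      | (k+1) =>
          refine Cc.ext (Cc.binom (v := v) (dd := k)
            (by rw [show ℓ + ι + k * ι = ℓ + (k+1) * ι by ring]; exact hv)) (fun n => ?_)
          simp only [_root_.dF, Nat.choose_succ_succ' n k]
          rw [pow_add]
          group
  | @ext ℓ g h hg he ihg =>
      refine Cc.ext ihg (fun n => by simp [_root_.dF, he])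


variable {U : ℕ → Subgroup Γ} {χ : Γ} {ι : ℕ}

section Machine

variable (hanti : ∀ {a b : ℕ}, a ≤ b → U b ≤ U a)
variable (hcommU : ∀ {a b : ℕ} {z w : Γ}, z ∈ U a → w ∈ U b → ⁅z, w⁆ ∈ U (a + b))
variable (hnormU : ∀ {a : ℕ} {z : Γ} (q : Γ), z ∈ U a → q * z * q⁻¹ ∈ U a)
variable (hU0 : ∀ z : Γ, z ∈ U 0)
variable (hχ : χ ∈ U ι)

theorem Cc.deriveIter (hχ : χ ∈ U ι) {ℓ : ℕ} {g : ℕ → Γ} (h : Cc U χ ι ℓ g) (k : ℕ) :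
    Cc U χ ι (ℓ + k * ι) (dF^[k] g) := by
  induction k with
  | zero => simpa using h
  | succ k ih =>
      have := ih.derive hχ
      rw [Function.iterate_succ_apply']
      exact this.mono (by ring_nf; omega)

theorem Cc.polyMem (hanti : ∀ {a b : ℕ}, a ≤ b → U b ≤ U a)
    (hcommU : ∀ {a b : ℕ} {z w : Γ}, z ∈ U a → w ∈ U b → ⁅z, w⁆ ∈ U (a + b))
    (hnormU : ∀ {a : ℕ} {z : Γ} (q : Γ), z ∈ U a → q * z * q⁻¹ ∈ U a)
    (hU0 : ∀ z : Γ, z ∈ U 0) (hχ : χ ∈ U ι)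
    {ℓ : ℕ} {g : ℕ → Γ} (h : Cc U χ ι ℓ g) (k n : ℕ) :
    dF^[k] g n ∈ U (ℓ + k * ι) :=
  (h.deriveIter hχ k).val hanti hcommU hnormU hU0 n

theorem dF_one : dF (fun _ => (1:Γ)) = fun _ => (1:Γ) := by
  funext n; simp [dF]

theorem dFk_one (k : ℕ) : dF^[k] (fun _ => (1:Γ)) = fun _ => (1:Γ) := by
  induction k with
  | zero => rfl
  | succ k ih => rw [Function.iterate_succ_apply', ih, dF_one]

theorem dF_mul (u v : ℕ → Γ) :
    dF (fun t => u t * v t) =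
      fun n => (u (n+1) * dF v n * (u (n+1))⁻¹) * dF u n := by
  funext n; simp only [dF]; group

theorem dF_conj (u w : ℕ → Γ) :
    (fun t => u t * w t * (u t)⁻¹) = fun t => ⁅u t, w t⁆ * w t := by
  funext n; group

end Machine

section PDL

variable {U : ℕ → Subgroup Γ} {χ : Γ} {ι : ℕ}

/-- Product rule for iterated differences, with controlled error. -/
theorem mainPDL (hanti : ∀ {a b : ℕ}, a ≤ b → U b ≤ U a)
    (hcommU : ∀ {a b : ℕ} {z w : Γ}, z ∈ U a → w ∈ U b → ⁅z, w⁆ ∈ U (a + b))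
    (hnormU : ∀ {a : ℕ} {z : Γ} (q : Γ), z ∈ U a → q * z * q⁻¹ ∈ U a)
    (hU0 : ∀ z : Γ, z ∈ U 0) (hχ : χ ∈ U ι) :
    ∀ (K : ℕ), ∀ (a b : ℕ) (u v : ℕ → Γ), Cc U χ ι a u → Cc U χ ι b v →
      ∀ n, dF^[K] (fun t => u t * v t) n * ((dF^[K] v n) * (dF^[K] u n))⁻¹
        ∈ U (a + b + K * ι) := by
  intro K
  induction K with
  | zero =>
      intro a b u v hu hv n
      have h1 : u n ∈ U a := hu.val hanti hcommU hnormU hU0 n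
      have h2 : v n ∈ U b := hv.val hanti hcommU hnormU hU0 n
      have : (fun t => u t * v t) n * (v n * u n)⁻¹ = ⁅u n, v n⁆ := by group
      rw [Function.iterate_zero_apply, Function.iterate_zero_apply,
        Function.iterate_zero_apply, this]
      exact hanti (by omega) (hcommU h1 h2)
  | succ K ih =>
      intro a b u v hu hv n
      -- CDC at level K, derived from ih
      have cdc : ∀ (c m : ℕ) (q w : ℕ → Γ), Cc U χ ι c q → Cc U χ ι m w →
          ∀ n, dF^[K] (fun t => q t * w t * (q t)⁻¹) n * (dF^[K] w n)⁻¹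
            ∈ U (c + m + K * ι) := by
        intro c m q w hq hw n
        have hθ : Cc U χ ι (c + m) (fun t => ⁅q t, w t⁆) := Cc.comm hq hw
        have key := ih (c + m) m (fun t => ⁅q t, w t⁆) w hθ hw n
        rw [dF_conj q w]
        set Y := dF^[K] (fun t => ⁅q t, w t⁆ * w t) n with hY
        set Wn := dF^[K] w n with hW
        set Tn := dF^[K] (fun t => ⁅q t, w t⁆) n with hT
        have hTn : Tn ∈ U (c + m + K * ι) := hθ.polyMem hanti hcommU hnormU hU0 hχ K n
        have hkey : Y * (Wn * Tn)⁻¹ ∈ U (c + m + K * ι) :=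
          hanti (by omega) key
        have : Y * Wn⁻¹ = (Y * (Wn * Tn)⁻¹) * (Wn * Tn * Wn⁻¹) := by group
        rw [this]
        exact mul_mem hkey (hnormU _ hTn)
      -- main step
      have hdfv := hv.derive hχ
      have hdfu := hu.derive hχ
      have hA : Cc U χ ι (b + ι) (fun n => u (n+1) * dF v n * (u (n+1))⁻¹) :=
        Cc.conj (Cc.shift hu) hdfv
      have key := ih (b + ι) (a + ι) (fun n => u (n+1) * dF v n * (u (n+1))⁻¹)
        (dF u) hA hdfu n
      have cdckey := cdc a (b + ι) (fun n => u (n+1)) (fun n => dF v n)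
        (Cc.shift hu) hdfv n
      rw [Function.iterate_succ_apply, Function.iterate_succ_apply,
        Function.iterate_succ_apply, dF_mul u v]
      set X := dF^[K] (fun n => (u (n+1) * dF v n * (u (n+1))⁻¹) * dF u n) n with hX
      set P := dF^[K] (fun n => u (n+1) * dF v n * (u (n+1))⁻¹) n with hP
      set Qq := dF^[K] (dF u) n with hQ
      set R := dF^[K] (dF v) n with hR
      have f1 : X * (Qq * P)⁻¹ ∈ U (a + b + (K+1) * ι) := by
        refine hanti (by ring_nf; omega) key
      have f2 : P * R⁻¹ ∈ U (a + b + (K+1) * ι) := by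
        refine hanti (by ring_nf; omega) cdckey
      have hQm : Qq ∈ U (a + ι + K * ι) := hdfu.polyMem hanti hcommU hnormU hU0 hχ K n
      have hRm : R ∈ U (b + ι + K * ι) := hdfv.polyMem hanti hcommU hnormU hU0 hχ K n
      have split : X * (R * Qq)⁻¹ =
          (X * (Qq * P)⁻¹) * ((Qq * (P * R⁻¹) * Qq⁻¹) * ⁅Qq, R⁆) := by group
      rw [split]
      refine mul_mem f1 (mul_mem (hnormU _ f2) (hanti ?_ (hcommU hQm hRm)))
      ring_nf; omega

end PDL


section Binom

variable {U : ℕ → Subgroup Γ} {χ : Γ} {ι : ℕ}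

theorem dF_binom_succ (v : Γ) (k : ℕ) :
    dF (fun n => v ^ n.choose (k+1)) = fun n => v ^ n.choose k := by
  funext n
  simp only [dF, Nat.choose_succ_succ' n k, pow_add]
  group

theorem dF_binom_zero (v : Γ) : dF (fun n => v ^ n.choose 0) = fun _ => (1:Γ) := by
  funext n; simp [dF]

theorem dFk_binom_le (v : Γ) : ∀ {m dd : ℕ}, m ≤ dd →
    dF^[m] (fun n => v ^ n.choose dd) = fun n => v ^ n.choose (dd - m) := by
  intro m
  induction m with
  | zero => intro dd _; simp
  | succ m ih =>
      intro dd hdd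
      obtain ⟨k, rfl⟩ : ∃ k, dd = k + 1 := ⟨dd - 1, by omega⟩
      rw [Function.iterate_succ_apply, dF_binom_succ, ih (by omega), Nat.succ_sub_succ]

theorem dFk_binom_gt (v : Γ) {m dd : ℕ} (h : dd < m) :
    dF^[m] (fun n => v ^ n.choose dd) = fun _ => (1:Γ) := by
  have h1 : dF^[dd+1] (fun n => v ^ n.choose dd) = fun _ => (1:Γ) := by
    rw [Function.iterate_succ_apply', dFk_binom_le v (le_refl dd)]
    simpa using dF_binom_zero v
  have : m = (m - (dd+1)) + (dd+1) := by omega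
  rw [this, Function.iterate_add_apply, h1, dFk_one]

/-- Inverse rule with controlled error. -/
theorem mainINVD (hanti : ∀ {a b : ℕ}, a ≤ b → U b ≤ U a)
    (hcommU : ∀ {a b : ℕ} {z w : Γ}, z ∈ U a → w ∈ U b → ⁅z, w⁆ ∈ U (a + b))
    (hnormU : ∀ {a : ℕ} {z : Γ} (q : Γ), z ∈ U a → q * z * q⁻¹ ∈ U a)
    (hU0 : ∀ z : Γ, z ∈ U 0) (hχ : χ ∈ U ι)
    {a : ℕ} {w : ℕ → Γ} (hw : Cc U χ ι a w) (K n : ℕ) :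
    dF^[K] (fun t => (w t)⁻¹) n * dF^[K] w n ∈ U (a + a + K * ι) := by
  have key := mainPDL hanti hcommU hnormU hU0 hχ K a a w (fun t => (w t)⁻¹)
    hw (Cc.inv hw) n
  have e : (fun t => w t * (w t)⁻¹) = fun _ => (1:Γ) := by funext t; group
  rw [e, dFk_one] at key
  have := inv_mem key
  simpa using this

end Binom

/-- Peeling off binomial coefficients, starting from the top degree `ρ`. -/
def peel (ρ : ℕ) (h : ℕ → Γ) : ℕ → ℕ → Γ
  | 0 => h
  | (k+1) => fun n => peel ρ h k n * ((dF^[ρ - k] (peel ρ h k) 0) ^ (n.choose (ρ - k)))⁻¹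


theorem peel_succ (ρ : ℕ) (h : ℕ → Γ) (k : ℕ) :
    peel ρ h (k+1) = fun n => peel ρ h k n *
      ((dF^[ρ - k] (peel ρ h k) 0) ^ (n.choose (ρ - k)))⁻¹ := rfl

theorem eq_of_dF_eq_one {u : ℕ → Γ} (h : ∀ n, dF u n = 1) : ∀ n, u n = u 0 := by
  intro n
  induction n with
  | zero => rfl
  | succ n ih =>
      have h2 : u (n+1) = dF u n * u n := by simp [dF]
      rw [h2, h n, one_mul, ih]

section Eval

variable {U : ℕ → Subgroup Γ} {χ : Γ} {ι : ℕ}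

theorem claimZbase
    (hanti : ∀ {a b : ℕ}, a ≤ b → U b ≤ U a)
    (hcommU : ∀ {a b : ℕ} {z w : Γ}, z ∈ U a → w ∈ U b → ⁅z, w⁆ ∈ U (a + b))
    (hnormU : ∀ {a : ℕ} {z : Γ} (q : Γ), z ∈ U a → q * z * q⁻¹ ∈ U a)
    (hU0 : ∀ z : Γ, z ∈ U 0) (hχ : χ ∈ U ι)
    {jj ρ DD : ℕ} (hι : 1 ≤ ι)
    (hbot : ∀ {a : ℕ} {z : Γ}, DD ≤ a → z ∈ U a → z = 1)
    (hDDle : DD ≤ jj + ρ * ι + 1)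
    {c : ℕ} (hc : DD ≤ c)
    {h : ℕ → Γ} (hcc : Cc U χ ι jj h) (h0 : h 0 = 1)
    (hdata : ∀ m, 1 ≤ m → m ≤ ρ → dF^[m] h 0 ∈ U (c + m * ι)) :
    ∀ n, h n = 1 := by
  have deg : ∀ n, dF^[ρ+1] h n = 1 := by
    intro n
    refine hbot ?_ (hcc.polyMem hanti hcommU hnormU hU0 hχ (ρ+1) n)
    have : ρ * ι + ι ≤ (ρ + 1) * ι := by ring_nf; omega
    omega
  have main : ∀ dd, dd ≤ ρ + 1 → ∀ n, dF^[ρ + 1 - dd] h n = 1 := by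
    intro dd
    induction dd with
    | zero => intro _ n; simpa using deg n
    | succ dd ih =>
        intro hdd n
        have hm : ρ + 1 - dd = (ρ - dd) + 1 := by omega
        have hprev := ih (by omega)
        rw [hm] at hprev
        have hconst : ∀ n, dF^[ρ - dd] h n = dF^[ρ - dd] h 0 := by
          apply eq_of_dF_eq_one
          intro n
          have := hprev n
          rwa [Function.iterate_succ_apply'] at this
        have hval : dF^[ρ - dd] h 0 = 1 := by
          rcases Nat.eq_zero_or_pos (ρ - dd) with h0' | hpos
          · rw [h0']; simpa using h0
          · exact hbot (le_trans hc (by omega)) (hdata _ hpos (by omega))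
        have he : ρ + 1 - (dd+1) = ρ - dd := by omega
        rw [he, hconst n, hval]
  intro n
  have := main (ρ+1) (le_refl _) n
  simpa using this

theorem claimZ
    (hanti : ∀ {a b : ℕ}, a ≤ b → U b ≤ U a)
    (hcommU : ∀ {a b : ℕ} {z w : Γ}, z ∈ U a → w ∈ U b → ⁅z, w⁆ ∈ U (a + b))
    (hnormU : ∀ {a : ℕ} {z : Γ} (q : Γ), z ∈ U a → q * z * q⁻¹ ∈ U a)
    (hU0 : ∀ z : Γ, z ∈ U 0) (hχ : χ ∈ U ι)
    {jj ρ DD : ℕ} (hι : 1 ≤ ι) (hjj : 1 ≤ jj) (hprime : ρ.Prime)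
    (hbot : ∀ {a : ℕ} {z : Γ}, DD ≤ a → z ∈ U a → z = 1)
    (hpowU : ∀ {a : ℕ} {z : Γ}, z ∈ U a → z ^ ρ ∈ U (ρ * a))
    (hDD : DD = jj + ρ * ι + 1) :
    ∀ fuel c (h : ℕ → Γ), jj + 1 ≤ c → Cc U χ ι jj h → h 0 = 1 →
      (∀ m, 1 ≤ m → m ≤ ρ → dF^[m] h 0 ∈ U (c + m * ι)) → DD ≤ c + fuel →
      h ρ = 1 := by
  have hρ2 : 2 ≤ ρ := hprime.two_le
  intro fuel
  induction fuel with
  | zero =>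
      intro c h hc hcc h0 hdata hfuel
      exact claimZbase hanti hcommU hnormU hU0 hχ hι hbot (by omega) (by omega) hcc h0 hdata ρ
  | succ fuel ih =>
      intro c h hc hcc h0 hdata hfuel
      by_cases hcD : DD ≤ c
      · exact claimZbase hanti hcommU hnormU hU0 hχ hι hbot (by omega) hcD hcc h0 hdata ρ
      push_neg at hcD
      set H := peel ρ h with hHdef
      have main : ∀ k, k ≤ ρ →
          (Cc U χ ι jj (H k)) ∧ (H k 0 = 1) ∧ (H k ρ = h ρ) ∧
          (∀ m, 1 ≤ m → m ≤ ρ → dF^[m] (H k) 0 ∈ U (c + m * ι)) ∧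
          (∀ m, ρ - k < m → m ≤ ρ → dF^[m] (H k) 0 ∈ U (c + jj + m * ι)) := by
        intro k
        induction k with
        | zero =>
            intro _
            exact ⟨hcc, h0, rfl, hdata, fun m hm1 hm2 => by omega⟩
        | succ k ihk =>
            intro hk
            obtain ⟨ccH, H0, Hρ, I3, I4⟩ := ihk (by omega)
            have hdd1 : 1 ≤ ρ - k := by omega
            have hddρ : ρ - k ≤ ρ := by omega
            have hvmem : dF^[ρ - k] (H k) 0 ∈ U (c + (ρ - k) * ι) := I3 _ hdd1 hddρ
            have ccb : Cc U χ ι c (fun n => (dF^[ρ - k] (H k) 0) ^ n.choose (ρ - k)) :=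
              Cc.binom hvmem
            have hsucc : H (k+1) = fun n => H k n *
                ((dF^[ρ - k] (H k) 0) ^ (n.choose (ρ - k)))⁻¹ := by
              rw [hHdef]; exact peel_succ ρ h k
            have ccH1 : Cc U χ ι jj (H (k+1)) := by
              rw [hsucc]
              exact Cc.mul ccH (Cc.mono (Cc.inv ccb) (by omega))
            have H10 : H (k+1) 0 = 1 := by
              rw [hsucc]
              simp only [H0, Nat.choose_eq_zero_of_lt (show (0:ℕ) < ρ - k by omega)]
              simp
            have factor1 : (dF^[ρ - k] (H k) 0) ^ (ρ.choose (ρ - k)) = 1 := by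
              rcases eq_or_lt_of_le hddρ with he | hlt
              · have hv1 : dF^[ρ - k] (H k) 0 = 1 := by
                  refine hbot ?_ hvmem
                  rw [he]
                  have : ι ≤ ρ * ι := Nat.le_mul_of_pos_left _ (by omega)
                  have h2 : ρ * ι ≤ ρ * ι := le_refl _
                  omega
                simp [hv1]
              · obtain ⟨e, he⟩ := hprime.dvd_choose_self (by omega : ρ - k ≠ 0) hlt
                rw [he, pow_mul]
                have hvρ : (dF^[ρ - k] (H k) 0) ^ ρ = 1 := by
                  refine hbot ?_ (hpowU hvmem)
                  rw [mul_add, hDD]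
                  have e1 : ι ≤ (ρ - k) * ι := Nat.le_mul_of_pos_left _ (by omega)
                  have e2 : ρ * ι ≤ ρ * ((ρ - k) * ι) := Nat.mul_le_mul_left _ e1
                  have e3 : c ≤ ρ * c := Nat.le_mul_of_pos_left _ (by omega)
                  omega
                simp [hvρ]
            have H1ρ : H (k+1) ρ = h ρ := by
              rw [hsucc]
              simp [factor1, Hρ]
            have data : ∀ m, 1 ≤ m → m ≤ ρ →
                (dF^[m] (H (k+1)) 0 ∈ U (c + m * ι)) ∧
                (ρ - k ≤ m → dF^[m] (H (k+1)) 0 ∈ U (c + jj + m * ι)) := by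
              intro m hm1 hm2
              have pdl := mainPDL hanti hcommU hnormU hU0 hχ m jj c (H k)
                (fun n => ((dF^[ρ - k] (H k) 0) ^ n.choose (ρ - k))⁻¹) ccH (Cc.inv ccb) 0
              have invd := mainINVD hanti hcommU hnormU hU0 hχ ccb m 0
              rw [← hsucc] at pdl
              set A := dF^[m] (H (k+1)) 0
              set B := dF^[m] (fun n => ((dF^[ρ - k] (H k) 0) ^ n.choose (ρ - k))⁻¹) 0
              set Cv := dF^[m] (fun n => (dF^[ρ - k] (H k) 0) ^ n.choose (ρ - k)) 0 with hCv
              set E := dF^[m] (H k) 0 with hE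
              have hsplit : A = (A * (B * E)⁻¹) * ((B * Cv) * (Cv⁻¹ * E)) := by group
              have hJ1 : A * (B * E)⁻¹ ∈ U (c + jj + m * ι) := hanti (by omega) pdl
              have hJ2 : B * Cv ∈ U (c + jj + m * ι) := hanti (by omega) invd
              rcases lt_trichotomy m (ρ - k) with hlt | heq | hgt
              · -- m < dd : Cv = 1
                have hCv1 : Cv = 1 := by
                  rw [hCv, dFk_binom_le _ (le_of_lt hlt)]
                  simp [Nat.choose_eq_zero_of_lt (show (0:ℕ) < ρ - k - m by omega)]
                constructor
                · have hEm : E ∈ U (c + m * ι) := I3 m hm1 hm2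
                  rw [hsplit]
                  exact mul_mem (hanti (by omega) hJ1) (mul_mem (hanti (by omega) hJ2)
                    (mul_mem (inv_mem (by rw [hCv1]; exact one_mem _)) hEm))
                · intro hcon; omega
              · -- m = dd : Cv = v = E
                have hCvv : Cv = E := by
                  rw [hCv, heq, dFk_binom_le _ (le_refl _)]
                  simp [hE, heq]
                have hone : Cv⁻¹ * E = 1 := by rw [hCvv]; group
                have hmem : A ∈ U (c + jj + m * ι) := by
                  rw [hsplit, hone, mul_one]
                  exact mul_mem hJ1 hJ2
                exact ⟨hanti (by omega) hmem, fun _ => hmem⟩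
              · -- m > dd : Cv = 1, E deep
                have hCv1 : Cv = 1 := by
                  rw [hCv, dFk_binom_gt _ hgt]
                have hEm : E ∈ U (c + jj + m * ι) := I4 m hgt hm2
                have hmem : A ∈ U (c + jj + m * ι) := by
                  rw [hsplit]
                  exact mul_mem hJ1 (mul_mem hJ2
                    (mul_mem (inv_mem (by rw [hCv1]; exact one_mem _)) hEm))
                exact ⟨hanti (by omega) hmem, fun _ => hmem⟩
            refine ⟨ccH1, H10, H1ρ, fun m hm1 hm2 => (data m hm1 hm2).1,
              fun m hm hm2 => (data m (by omega) hm2).2 (by omega)⟩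
      obtain ⟨ccF, F0, Fρ, _, I4⟩ := main ρ (le_refl _)
      have hz := ih (c + jj) (H ρ) (by omega) ccF F0
        (fun m hm1 hm2 => I4 m (by omega) hm2) (by omega)
      rw [← Fρ]; exact hz

theorem evalMain
    (hanti : ∀ {a b : ℕ}, a ≤ b → U b ≤ U a)
    (hcommU : ∀ {a b : ℕ} {z w : Γ}, z ∈ U a → w ∈ U b → ⁅z, w⁆ ∈ U (a + b))
    (hnormU : ∀ {a : ℕ} {z : Γ} (q : Γ), z ∈ U a → q * z * q⁻¹ ∈ U a)
    (hU0 : ∀ z : Γ, z ∈ U 0) (hχ : χ ∈ U ι)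
    {jj ρ DD : ℕ} (hι : 1 ≤ ι) (hjj : 1 ≤ jj) (hprime : ρ.Prime)
    (hbot : ∀ {a : ℕ} {z : Γ}, DD ≤ a → z ∈ U a → z = 1)
    (hpowU : ∀ {a : ℕ} {z : Γ}, z ∈ U a → z ^ ρ ∈ U (ρ * a))
    (hDD : DD = jj + ρ * ι + 1)
    {g : ℕ → Γ} (hcc : Cc U χ ι jj g) (h0 : g 0 = 1) :
    g ρ = dF^[ρ] g 0 := by
  have hρ2 : 2 ≤ ρ := hprime.two_le
  set H := peel ρ g with hHdef
  have main : ∀ k, k ≤ ρ →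
      (Cc U χ ι jj (H k)) ∧ (H k 0 = 1) ∧
      (1 ≤ k → H k ρ = g ρ * (dF^[ρ] g 0)⁻¹) ∧
      (∀ m, ρ - k < m → m ≤ ρ → dF^[m] (H k) 0 ∈ U (jj + jj + m * ι)) := by
    intro k
    induction k with
    | zero =>
        intro _
        exact ⟨hcc, h0, fun hcon => by omega, fun m hm1 hm2 => by omega⟩
    | succ k ihk =>
        intro hk
        obtain ⟨ccH, H0, Hρ, I4⟩ := ihk (by omega)
        have hdd1 : 1 ≤ ρ - k := by omega
        have hddρ : ρ - k ≤ ρ := by omega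
        have hvmem : dF^[ρ - k] (H k) 0 ∈ U (jj + (ρ - k) * ι) :=
          ccH.polyMem hanti hcommU hnormU hU0 hχ (ρ - k) 0
        have ccb : Cc U χ ι jj (fun n => (dF^[ρ - k] (H k) 0) ^ n.choose (ρ - k)) :=
          Cc.binom hvmem
        have hsucc : H (k+1) = fun n => H k n *
            ((dF^[ρ - k] (H k) 0) ^ (n.choose (ρ - k)))⁻¹ := by
          rw [hHdef]; exact peel_succ ρ g k
        have ccH1 : Cc U χ ι jj (H (k+1)) := by
          rw [hsucc]
          exact Cc.mul ccH (Cc.inv ccb)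
        have H10 : H (k+1) 0 = 1 := by
          rw [hsucc]
          simp only [H0, Nat.choose_eq_zero_of_lt (show (0:ℕ) < ρ - k by omega)]
          simp
        have H1ρ : H (k+1) ρ = g ρ * (dF^[ρ] g 0)⁻¹ := by
          rcases Nat.eq_zero_or_pos k with rfl | hkpos
          · -- first peel: k = 0, dd = ρ
            rw [hsucc]
            have e1 : ρ - 0 = ρ := by omega
            have e2 : H 0 = g := rfl
            simp only [e1, e2, Nat.choose_self, pow_one]
          · -- later peels: factor dies
            have hlt : ρ - k < ρ := by omega
            obtain ⟨e, he⟩ := hprime.dvd_choose_self (by omega : ρ - k ≠ 0) hlt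
            have hvρ : (dF^[ρ - k] (H k) 0) ^ ρ = 1 := by
              refine hbot ?_ (hpowU hvmem)
              rw [mul_add, hDD]
              have e1 : ι ≤ (ρ - k) * ι := Nat.le_mul_of_pos_left _ (by omega)
              have e2 : ρ * ι ≤ ρ * ((ρ - k) * ι) := Nat.mul_le_mul_left _ e1
              have e3 : 2 * jj ≤ ρ * jj := Nat.mul_le_mul_right _ (by omega)
              omega
            have factor1 : (dF^[ρ - k] (H k) 0) ^ (ρ.choose (ρ - k)) = 1 := by
              rw [he, pow_mul, hvρ, one_pow]
            rw [hsucc]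
            simp only [factor1, inv_one, mul_one]
            exact Hρ hkpos
        have data : ∀ m, ρ - (k+1) < m → m ≤ ρ →
            dF^[m] (H (k+1)) 0 ∈ U (jj + jj + m * ι) := by
          intro m hm1 hm2
          have hm1' : 1 ≤ m := by omega
          have pdl := mainPDL hanti hcommU hnormU hU0 hχ m jj jj (H k)
            (fun n => ((dF^[ρ - k] (H k) 0) ^ n.choose (ρ - k))⁻¹) ccH (Cc.inv ccb) 0
          have invd := mainINVD hanti hcommU hnormU hU0 hχ ccb m 0
          rw [← hsucc] at pdl
          set A := dF^[m] (H (k+1)) 0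
          set B := dF^[m] (fun n => ((dF^[ρ - k] (H k) 0) ^ n.choose (ρ - k))⁻¹) 0
          set Cv := dF^[m] (fun n => (dF^[ρ - k] (H k) 0) ^ n.choose (ρ - k)) 0 with hCv
          set E := dF^[m] (H k) 0 with hE
          have hsplit : A = (A * (B * E)⁻¹) * ((B * Cv) * (Cv⁻¹ * E)) := by group
          have hJ1 : A * (B * E)⁻¹ ∈ U (jj + jj + m * ι) := hanti (by omega) pdl
          have hJ2 : B * Cv ∈ U (jj + jj + m * ι) := hanti (by omega) invd
          rcases lt_trichotomy m (ρ - k) with hlt | heq | hgt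
          · omega
          · have hCvv : Cv = E := by
              rw [hCv, heq, dFk_binom_le _ (le_refl _)]
              simp [hE, heq]
            have hone : Cv⁻¹ * E = 1 := by rw [hCvv]; group
            rw [hsplit, hone, mul_one]
            exact mul_mem hJ1 hJ2
          · have hCv1 : Cv = 1 := by
              rw [hCv, dFk_binom_gt _ hgt]
            have hEm : E ∈ U (jj + jj + m * ι) := I4 m hgt hm2
            rw [hsplit]
            exact mul_mem hJ1 (mul_mem hJ2
              (mul_mem (inv_mem (by rw [hCv1]; exact one_mem _)) hEm))
        exact ⟨ccH1, H10, fun _ => H1ρ, data⟩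
  obtain ⟨ccF, F0, Fρ, I4⟩ := main ρ (le_refl _)
  have hz := claimZ hanti hcommU hnormU hU0 hχ hι hjj hprime hbot hpowU hDD DD
    (jj + jj) (H ρ) (by omega) ccF F0 (fun m hm1 hm2 => I4 m (by omega) hm2) (by omega)
  rw [Fρ (by omega)] at hz
  exact mul_inv_eq_one.mp hz

end Eval


/-- Co-difference of a sequence. -/
def dG (u : ℕ → Γ) : ℕ → Γ := fun n => u n * (u (n + 1))⁻¹

theorem dG_eq_inv_dF (u : ℕ → Γ) : dG u = fun n => (dF u n)⁻¹ := by
  funext n; simp [dG, dF]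

section Assemble

variable {U : ℕ → Subgroup Γ} {χ : Γ} {ι : ℕ}

theorem engel_conj_eq (y : Γ) : ∀ m : ℕ,
    (fun n => χ ^ n * engel y χ (m + 1) * (χ ^ n)⁻¹) =
      dG^[m] (fun n => χ ^ n * ⁅y, χ⁆ * (χ ^ n)⁻¹) := by
  intro m
  induction m with
  | zero =>
      funext n
      simp [engel]
  | succ m ih =>
      rw [Function.iterate_succ_apply', ← ih]
      funext n
      simp only [dG, engel, pow_succ]
      group

theorem lazardQ
    (hanti : ∀ {a b : ℕ}, a ≤ b → U b ≤ U a)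
    (hcommU : ∀ {a b : ℕ} {z w : Γ}, z ∈ U a → w ∈ U b → ⁅z, w⁆ ∈ U (a + b))
    (hnormU : ∀ {a : ℕ} {z : Γ} (q : Γ), z ∈ U a → q * z * q⁻¹ ∈ U a)
    (hU0 : ∀ z : Γ, z ∈ U 0) (hχ : χ ∈ U ι)
    {jj ρ DD : ℕ} (hι : 1 ≤ ι) (hjj : 1 ≤ jj) (hprime : ρ.Prime)
    (hbot : ∀ {a : ℕ} {z : Γ}, DD ≤ a → z ∈ U a → z = 1)
    (hpowU : ∀ {a : ℕ} {z : Γ}, z ∈ U a → z ^ ρ ∈ U (ρ * a))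
    (hDD : DD = jj + ρ * ι + 1)
    {y : Γ} (hy : y ∈ U jj) :
    engel y χ ρ = ⁅y, χ ^ ρ⁆ := by
  have hρ2 : 2 ≤ ρ := hprime.two_le
  set a := jj + ι with ha
  -- the commutator sequence
  set d : ℕ → Γ := fun n => ⁅y, χ ^ n⁆ with hd
  have ccd : Cc U χ ι jj d := by
    have := Cc.comm (U := U) (χ := χ) (ι := ι) (Cc.const hy) Cc.xpow
    simpa using this
  have d0 : d 0 = 1 := by simp [hd]
  -- evaluate
  have heval : d ρ = dF^[ρ] d 0 :=
    evalMain hanti hcommU hnormU hU0 hχ hι hjj hprime hbot hpowU hDD ccd d0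
  -- the conjugated first commutator
  set φ : ℕ → Γ := fun n => χ ^ n * ⁅y, χ⁆ * (χ ^ n)⁻¹ with hφ
  have ccφ : Cc U χ ι a φ := Cc.conj Cc.xpow (Cc.const (hcommU hy hχ))
  -- dF d = θ * φ
  set θ : ℕ → Γ := fun n => ⁅d n, φ n⁆ with hθ
  have ccθ : Cc U χ ι (jj + a) θ := Cc.comm ccd ccφ
  have dFd : dF d = fun n => θ n * φ n := by
    funext n
    simp only [dF, hd, hθ, hφ, pow_succ]
    group
  -- compare dF^[ρ] d 0 with dF^[ρ-1] φ 0
  have hiter : dF^[ρ] d 0 = dF^[ρ - 1] (dF d) 0 := by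
    conv_lhs => rw [show ρ = (ρ - 1) + 1 by omega, Function.iterate_succ_apply]
  have hmulι : (ρ - 1) * ι + ι = ρ * ι := by
    have : (ρ - 1) + 1 = ρ := by omega
    calc (ρ - 1) * ι + ι = ((ρ - 1) + 1) * ι := by ring
    _ = ρ * ι := by rw [this]
  have comp1 : dF^[ρ] d 0 = dF^[ρ - 1] φ 0 := by
    have pdl := mainPDL hanti hcommU hnormU hU0 hχ (ρ - 1) (jj + a) a θ φ ccθ ccφ 0
    have hq : dF^[ρ - 1] (fun t => θ t * φ t) 0 *
        (dF^[ρ - 1] φ 0 * dF^[ρ - 1] θ 0)⁻¹ = 1 := by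
      refine hbot ?_ pdl
      have := hmulι
      omega
    have hθ0 : dF^[ρ - 1] θ 0 = 1 := by
      refine hbot ?_ (ccθ.polyMem hanti hcommU hnormU hU0 hχ (ρ - 1) 0)
      have := hmulι
      omega
    rw [hiter, dFd]
    rw [hθ0, mul_one] at hq
    exact mul_inv_eq_one.mp hq
  -- the engel side: engel y χ ρ = dG^[ρ-1] φ 0
  have hengel : engel y χ ρ = dG^[ρ - 1] φ 0 := by
    have h1 := engel_conj_eq (χ := χ) y (ρ - 1)
    have h2 : ρ - 1 + 1 = ρ := by omega
    rw [h2] at h1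
    have := congrFun h1 0
    simpa [hφ] using this
  -- COCONJ: dG-iterates agree with dF-iterates up to sign and a deep factor
  have coconj : ∀ m : ℕ, ∃ J : ℕ → Γ, Cc U χ ι (a + a + m * ι) J ∧
      ((Even m ∧ dG^[m] φ = fun n => dF^[m] φ n * J n) ∨
       (Odd m ∧ dG^[m] φ = fun n => (dF^[m] φ n)⁻¹ * J n)) := by
    intro m
    induction m with
    | zero =>
        refine ⟨fun _ => 1, Cc.const (one_mem _), Or.inl ⟨Even.zero, ?_⟩⟩
        funext n; simp
    | succ m ih =>
        obtain ⟨J, ccJ, hcase⟩ := ih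
        have ccv : Cc U χ ι (a + m * ι) (dF^[m] φ) := ccφ.deriveIter hχ m
        have hvsucc : dF^[m + 1] φ = dF (dF^[m] φ) := by
          rw [Function.iterate_succ_apply']
        have hGsucc : dG^[m + 1] φ = dG (dG^[m] φ) := by
          rw [Function.iterate_succ_apply']
        have hmone : (m + 1) * ι = m * ι + ι := by ring
        rcases hcase with ⟨hev, hEq⟩ | ⟨hod, hEq⟩
        · -- even m: dG^[m] φ = v * J, next is odd
          refine ⟨fun n => dF^[m] φ (n + 1) * (dF J n)⁻¹ * (dF^[m] φ (n + 1))⁻¹,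
            ?_, Or.inr ⟨by simp [Nat.odd_add_one, Nat.not_odd_iff_even, hev], ?_⟩⟩
          · refine Cc.mono (Cc.conj (Cc.shift ccv) (Cc.inv (ccJ.derive hχ))) ?_
            omega
          · rw [hGsucc, hEq, hvsucc]
            funext n
            simp only [dG, dF]
            group
        · -- odd m: dG^[m] φ = v⁻¹ * J, next is even
          refine ⟨fun n => ⁅(dF (dF^[m] φ) n)⁻¹, (dF^[m] φ (n + 1))⁻¹⁆ *
              ((dF^[m] φ (n + 1))⁻¹ * (dF J n)⁻¹ * ((dF^[m] φ (n + 1))⁻¹)⁻¹),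
            ?_, Or.inl ⟨by simpa [Nat.even_add_one, Nat.not_even_iff_odd] using hod, ?_⟩⟩
          · refine Cc.mul ?_ ?_
            · refine Cc.mono (Cc.comm (Cc.inv (ccv.derive hχ)) (Cc.inv (Cc.shift ccv))) ?_
              omega
            · refine Cc.mono (Cc.conj (Cc.inv (Cc.shift ccv)) (Cc.inv (ccJ.derive hχ))) ?_
              omega
          · rw [hGsucc, hEq, hvsucc]
            funext n
            simp only [dG, dF]
            group
  -- conclude on the engel side
  have comp2 : engel y χ ρ = dF^[ρ - 1] φ 0 := by
    obtain ⟨J, ccJ, hcase⟩ := coconj (ρ - 1)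
    have hJ0 : J 0 = 1 := by
      refine hbot ?_ (ccJ.val hanti hcommU hnormU hU0 0)
      have := hmulι
      omega
    rcases hcase with ⟨hev, hEq⟩ | ⟨hod, hEq⟩
    · rw [hengel, hEq]
      simp [hJ0]
    · -- ρ - 1 odd, so ρ = 2 ; use squares die
      have hρeven : Even ρ := by
        have : ρ = (ρ - 1) + 1 := by omega
        rw [this]
        exact hod.add_one
      have hw : (dF^[ρ - 1] φ 0) ^ ρ = 1 := by
        refine hbot ?_ (hpowU (ccφ.polyMem hanti hcommU hnormU hU0 hχ (ρ - 1) 0))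
        have h2 : 2 ≤ ρ := hρ2
        have e1 : 2 * (a + (ρ - 1) * ι) ≤ ρ * (a + (ρ - 1) * ι) :=
          Nat.mul_le_mul_right _ h2
        have := hmulι
        omega
      have hρ2' : ρ = 2 := (Nat.Prime.even_iff hprime).mp hρeven
      have hinv : (dF^[ρ - 1] φ 0)⁻¹ = dF^[ρ - 1] φ 0 := by
        rw [inv_eq_iff_mul_eq_one, ← pow_two, ← hρ2']
        exact hw
      rw [hengel, hEq]
      simp [hJ0, hinv]
  rw [comp2, ← comp1, ← heval]

end Assemble

end Abstract


section Concrete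

variable {G : Type*} [Group G] {p : ℕ}

theorem engel_map {H : Type*} [Group H] (f : G →* H) (y x : G) :
    ∀ m, f (engel y x m) = engel (f y) (f x) m := by
  intro m
  induction m with
  | zero => rfl
  | succ m ih =>
      show f ⁅engel y x m, x⁆ = ⁅engel (f y) (f x) m, f x⁆
      rw [map_commutatorElement, ih]

theorem engel_add (y x : G) (m : ℕ) : ∀ n, engel y x (m + n) = engel (engel y x m) x n := by
  intro n
  induction n with
  | zero => rfl
  | succ n ih =>
      show ⁅engel y x (m + n), x⁆ = ⁅engel (engel y x m) x n, x⁆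
      exact congrArg (fun z => ⁅z, x⁆) ih

theorem Santi (S : ℕ → Subgroup G) (hmono : ∀ i, S (i + 1) ≤ S i) :
    ∀ {a b : ℕ}, a ≤ b → S b ≤ S a := by
  intro a b hab
  induction b with
  | zero => have : a = 0 := by omega
            rw [this]
  | succ b ih =>
      rcases Nat.eq_or_lt_of_le hab with he | hlt
      · rw [he]
      · exact le_trans (hmono b) (ih (by omega))

theorem Snormal (S : ℕ → Subgroup G) (hS1 : S 1 = ⊤)
    (hmono : ∀ i, S (i + 1) ≤ S i)
    (hcomm : ∀ i j, ∀ x ∈ S i, ∀ y ∈ S j, ⁅x, y⁆ ∈ S (i + j))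
    (w : ℕ) (s : G) (hs : s ∈ S w) (g : G) : g * s * g⁻¹ ∈ S w := by
  have hg1 : g ∈ S 1 := by rw [hS1]; trivial
  have hc : ⁅g, s⁆ ∈ S (1 + w) := hcomm 1 w g hg1 s hs
  have he : g * s * g⁻¹ = ⁅g, s⁆ * s := by group
  rw [he]
  exact mul_mem (Santi S hmono (by omega) hc) hs

theorem engel_mem (S : ℕ → Subgroup G)
    (hcomm : ∀ i j, ∀ x ∈ S i, ∀ y ∈ S j, ⁅x, y⁆ ∈ S (i + j))
    {i : ℕ} {x : G} (hx : x ∈ S i) :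
    ∀ (m : ℕ) {c : ℕ} {y : G}, y ∈ S c → engel y x m ∈ S (c + m * i) := by
  intro m
  induction m with
  | zero => intro c y hy; simpa [engel] using hy
  | succ m ih =>
      intro c y hy
      have h1 : ⁅engel y x m, x⁆ ∈ S (c + m * i + i) := hcomm _ _ _ (ih hy) _ hx
      have he : c + (m + 1) * i = c + m * i + i := by ring
      rw [he]
      exact h1

/-- Lazard's congruence at the level of the group (general form). -/
theorem lazard1 (hp : p.Prime) (S : ℕ → Subgroup G) (hS1 : S 1 = ⊤)
    (hmono : ∀ i, S (i + 1) ≤ S i)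
    (hcomm : ∀ i j, ∀ x ∈ S i, ∀ y ∈ S j, ⁅x, y⁆ ∈ S (i + j))
    (hpow : ∀ i, ∀ x ∈ S i, x ^ p ∈ S (p * i))
    (i : ℕ) (hi : 1 ≤ i) (x : G) (hx : x ∈ S i)
    (j : ℕ) (hj : 1 ≤ j) (y : G) (hy : y ∈ S j) :
    engel y x p * (⁅y, x ^ p⁆)⁻¹ ∈ S (j + p * i + 1) := by
  set DD := j + p * i + 1 with hDD
  haveI : (S DD).Normal := ⟨fun s hs g => Snormal S hS1 hmono hcomm DD s hs g⟩
  set π : G →* G ⧸ S DD := QuotientGroup.mk' (S DD) with hπ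
  have hsurj : Function.Surjective π := QuotientGroup.mk'_surjective (S DD)
  set U : ℕ → Subgroup (G ⧸ S DD) := fun w => (S w).map π with hU
  have hS0 : ∀ g : G, g ∈ S 0 := by
    intro g
    have hg1 : g ∈ S 1 := by rw [hS1]; trivial
    exact hmono 0 hg1
  have hanti : ∀ {a b : ℕ}, a ≤ b → U b ≤ U a := by
    intro a b hab
    exact Subgroup.map_mono (Santi S hmono hab)
  have hcommU : ∀ {a b : ℕ} {z w : G ⧸ S DD}, z ∈ U a → w ∈ U b → ⁅z, w⁆ ∈ U (a + b) := by
    intro a b z w hz hw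
    obtain ⟨s, hs, rfl⟩ := hz
    obtain ⟨t, ht, rfl⟩ := hw
    rw [← map_commutatorElement]
    exact ⟨⁅s, t⁆, hcomm a b s hs t ht, rfl⟩
  have hnormU : ∀ {a : ℕ} {z : G ⧸ S DD} (q : G ⧸ S DD), z ∈ U a → q * z * q⁻¹ ∈ U a := by
    intro a z q hz
    obtain ⟨s, hs, rfl⟩ := hz
    obtain ⟨g, rfl⟩ := hsurj q
    refine ⟨g * s * g⁻¹, Snormal S hS1 hmono hcomm a s hs g, ?_⟩
    simp [map_mul]
  have hU0 : ∀ z : G ⧸ S DD, z ∈ U 0 := by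
    intro z
    obtain ⟨g, rfl⟩ := hsurj z
    exact ⟨g, hS0 g, rfl⟩
  have hbot : ∀ {a : ℕ} {z : G ⧸ S DD}, DD ≤ a → z ∈ U a → z = 1 := by
    intro a z hale hz
    obtain ⟨s, hs, rfl⟩ := hz
    exact (QuotientGroup.eq_one_iff s).mpr (Santi S hmono hale hs)
  have hpowU : ∀ {a : ℕ} {z : G ⧸ S DD}, z ∈ U a → z ^ p ∈ U (p * a) := by
    intro a z hz
    obtain ⟨s, hs, rfl⟩ := hz
    refine ⟨s ^ p, hpow a s hs, ?_⟩
    simp [map_pow]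
  have hχ : π x ∈ U i := ⟨x, hx, rfl⟩
  have hyU : π y ∈ U j := ⟨y, hy, rfl⟩
  have key := lazardQ hanti hcommU hnormU hU0 hχ hi hj hp hbot hpowU hDD hyU
  have hmap : π (engel y x p * (⁅y, x ^ p⁆)⁻¹) = 1 := by
    rw [map_mul, map_inv, map_commutatorElement, map_pow, engel_map, key]
    group
  exact (QuotientGroup.eq_one_iff _).mp hmap

/-- Iterated `p`-th powers stay in the series. -/
theorem xpow_pow_mem (S : ℕ → Subgroup G)
    (hpow : ∀ i, ∀ x ∈ S i, x ^ p ∈ S (p * i))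
    {i : ℕ} {x : G} (hx : x ∈ S i) :
    ∀ a : ℕ, x ^ (p ^ a) ∈ S (p ^ a * i) := by
  intro a
  induction a with
  | zero => simpa using hx
  | succ a ih =>
      have h1 : (x ^ (p ^ a)) ^ p ∈ S (p * (p ^ a * i)) := hpow _ _ ih
      have e1 : x ^ (p ^ (a + 1)) = (x ^ (p ^ a)) ^ p := by
        rw [← pow_mul, pow_succ]
      have e2 : p ^ (a + 1) * i = p * (p ^ a * i) := by ring
      rw [e1, e2]
      exact h1

/-- The chain congruence: `engel y x (p^a) ≡ ⁅y, x^(p^a)⁆`. -/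
theorem Dchain (hp : p.Prime) (S : ℕ → Subgroup G) (hS1 : S 1 = ⊤)
    (hmono : ∀ i, S (i + 1) ≤ S i)
    (hcomm : ∀ i j, ∀ x ∈ S i, ∀ y ∈ S j, ⁅x, y⁆ ∈ S (i + j))
    (hpow : ∀ i, ∀ x ∈ S i, x ^ p ∈ S (p * i))
    (i : ℕ) (hi : 1 ≤ i) (x : G) (hx : x ∈ S i) :
    ∀ a : ℕ, ∀ j : ℕ, 1 ≤ j → ∀ y ∈ S j,
      engel y x (p ^ a) * (⁅y, x ^ (p ^ a)⁆)⁻¹ ∈ S (j + p ^ a * i + 1) := by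
  intro a
  induction a with
  | zero =>
      intro j hj y hy
      have e : engel y x (p ^ 0) = ⁅y, x ^ (p ^ 0)⁆ := by
        simp [engel]
      rw [e, mul_inv_cancel]
      exact one_mem _
  | succ a ih =>
      intro j hj y hy
      set q := p ^ a with hq
      have hq1 : 1 ≤ q := Nat.one_le_pow _ _ hp.pos
      have hqi1 : 1 ≤ q * i := Nat.mul_le_mul hq1 hi
      have hX : x ^ q ∈ S (q * i) := xpow_pow_mem S hpow hx a
      have block : ∀ k : ℕ,
          engel y x (k * q) * (engel y (x ^ q) k)⁻¹ ∈ S (j + k * q * i + 1) := by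
        intro k
        induction k with
        | zero => simpa [engel] using one_mem (S (j + 0 * q * i + 1))
        | succ k ihk =>
            set u := engel y x (k * q) with hu
            set v := engel y (x ^ q) k with hv
            set ck := j + k * q * i with hck
            have hum : u ∈ S ck := by
              rw [hu, hck]
              exact engel_mem S hcomm hx (k * q) hy
            have hvm : v ∈ S ck := by
              rw [hv, hck, show j + k * q * i = j + k * (q * i) by ring]
              exact engel_mem S hcomm hX k hy
            have hw : v⁻¹ * u ∈ S (ck + 1) := by
              have h1 : u * v⁻¹ ∈ S (ck + 1) := ihk
              have he : v⁻¹ * u = v⁻¹ * (u * v⁻¹) * (v⁻¹)⁻¹ := by group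
              rw [he]
              exact Snormal S hS1 hmono hcomm (ck + 1) _ h1 v⁻¹
            have e1 : engel y x ((k + 1) * q) = engel u x q := by
              rw [hu, ← engel_add]
              congr 1
              ring
            have h2 : engel u x q * (⁅u, x ^ q⁆)⁻¹ ∈ S (ck + q * i + 1) :=
              ih ck (by omega) u hum
            have h3 : ⁅u, x ^ q⁆ * (⁅v, x ^ q⁆)⁻¹ ∈ S (ck + q * i + 1) := by
              have hcw : ⁅v⁻¹ * u, x ^ q⁆ ∈ S (ck + 1 + q * i) := hcomm _ _ _ hw _ hX
              have hident : ⁅u, x ^ q⁆ * (⁅v, x ^ q⁆)⁻¹ =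
                  v * ⁅v⁻¹ * u, x ^ q⁆ * v⁻¹ := by group
              rw [hident]
              refine Santi S hmono (by omega)
                (Snormal S hS1 hmono hcomm (ck + 1 + q * i) _ hcw v)
            have e2 : engel y (x ^ q) (k + 1) = ⁅v, x ^ q⁆ := by rw [hv]; rfl
            have final : engel y x ((k + 1) * q) * (engel y (x ^ q) (k + 1))⁻¹ =
                (engel u x q * (⁅u, x ^ q⁆)⁻¹) * (⁅u, x ^ q⁆ * (⁅v, x ^ q⁆)⁻¹) := by
              rw [e1, e2]; group
            have eidx : j + (k + 1) * q * i + 1 = ck + q * i + 1 := by rw [hck]; ring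
            rw [final, eidx]
            exact mul_mem h2 h3
      have hblk := block p
      have hlaz := lazard1 hp S hS1 hmono hcomm hpow (q * i) hqi1 (x ^ q) hX j hj y hy
      have e3 : (x ^ q) ^ p = x ^ (p ^ (a + 1)) := by
        rw [← pow_mul, ← pow_succ]
      have e4 : p * q = p ^ (a + 1) := by rw [hq, ← pow_succ']
      have final : engel y x (p ^ (a + 1)) * (⁅y, x ^ (p ^ (a + 1))⁆)⁻¹ =
          (engel y x (p * q) * (engel y (x ^ q) p)⁻¹) *
            (engel y (x ^ q) p * (⁅y, (x ^ q) ^ p⁆)⁻¹) := by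
        rw [e3, e4]; group
      rw [final]
      have hidx1 : j + p * q * i + 1 = j + p ^ (a + 1) * i + 1 := by rw [← e4]
      have hidx2 : j + p * (q * i) + 1 = j + p ^ (a + 1) * i + 1 := by
        rw [← e4]; try ring
      refine mul_mem ?_ ?_
      · rw [← hidx1]; exact hblk
      · rw [← hidx2]; exact hlaz

end Concrete

/-- Lazard's lemma, stated at the level of the group. Given an `N_p`-series
`G = S 1 ≥ S 2 ≥ ⋯` and `x ∈ S i \ S (i+1)`, the identity `(ad x*)^p = ad ((x^p)*)` in the
associated graded Lie algebra `L*(G)` over `F_p` means: for every homogeneous element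
`y ∈ S j`, the commutators `[y, ₚ x]` and `[y, x^p]` agree modulo `S (j + p*i + 1)`.
In particular if `x^t = 1` then `x*` is ad-nilpotent of index at most `t`, i.e.
`[y, ₜ x] ∈ S (j + t*i + 1)` for all `y ∈ S j`. -/
theorem stmt7 {G : Type*} [Group G] {p : ℕ} (hp : p.Prime)
    (S : ℕ → Subgroup G) (hS1 : S 1 = ⊤)
    (hmono : ∀ i, S (i + 1) ≤ S i)
    (hcomm : ∀ i j, ∀ x ∈ S i, ∀ y ∈ S j, ⁅x, y⁆ ∈ S (i + j))
    (hpow : ∀ i, ∀ x ∈ S i, x ^ p ∈ S (p * i))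
    (i : ℕ) (hi : 1 ≤ i) (x : G) (hx : x ∈ S i) (hx' : x ∉ S (i + 1)) :
    (∀ j, 1 ≤ j → ∀ y ∈ S j, engel y x p * (⁅y, x ^ p⁆)⁻¹ ∈ S (j + p * i + 1)) ∧
    (∀ t : ℕ, 0 < t → x ^ t = 1 →
      ∀ j, 1 ≤ j → ∀ y ∈ S j, engel y x t ∈ S (j + t * i + 1)) := by
  constructor
  · intro j hj y hy
    exact lazard1 hp S hS1 hmono hcomm hpow i hi x hx j hj y hy
  · intro t ht hxt j hj y hy
    set a := t.factorization p with ha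
    set m := t / p ^ a with hmdef
    have hfact : p ^ a * m = t := Nat.ordProj_mul_ordCompl_eq_self t p
    have hm1 : 0 < m := Nat.ordCompl_pos p ht.ne'
    have hcop : Nat.Coprime p m := hp.coprime_iff_not_dvd.mpr (Nat.not_dvd_ordCompl hp ht.ne')
    set z := x ^ (p ^ a) with hz
    have hzm : z ∈ S (p ^ a * i) := xpow_pow_mem S hpow hx a
    set dd := p ^ a * i with hdd
    have hpa1 : 1 ≤ p ^ a := Nat.one_le_pow _ _ hp.pos
    have hdd1 : 1 ≤ dd := by
      rw [hdd]; exact Nat.mul_le_mul hpa1 hi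
    have hzp : z ^ p ∈ S (dd + 1) := by
      have h1 := hpow dd z hzm
      refine Santi S hmono ?_ h1
      have h2 : 2 * dd ≤ p * dd := Nat.mul_le_mul_right dd hp.two_le
      omega
    have hzm1 : z ^ m = 1 := by
      rw [hz, ← pow_mul, hfact, hxt]
    have hzS : z ∈ S (dd + 1) := by
      have hg1 : Nat.gcd p m = 1 := hcop
      have hbez := Nat.gcd_eq_gcd_ab p m
      rw [hg1] at hbez
      have hbez' : (1 : ℤ) = (p : ℤ) * Nat.gcdA p m + (m : ℤ) * Nat.gcdB p m := by
        simpa using hbez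
      have key : z = (z ^ p) ^ (Nat.gcdA p m) * (z ^ m) ^ (Nat.gcdB p m) := by
        conv_lhs => rw [← zpow_one z]
        rw [hbez', zpow_add, zpow_mul, zpow_mul, zpow_natCast, zpow_natCast]
      rw [key, hzm1]
      refine mul_mem (Subgroup.zpow_mem _ hzp _) ?_
      simpa using Subgroup.zpow_mem (S (dd + 1)) (one_mem _) (Nat.gcdB p m)
    have hcz : ⁅y, z⁆ ∈ S (j + p ^ a * i + 1) := by
      have h1 := hcomm j (dd + 1) y hy z hzS
      have e : j + (dd + 1) = j + p ^ a * i + 1 := by rw [hdd]; omega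
      rw [← e]
      exact h1
    have hw : engel y x (p ^ a) ∈ S (j + p ^ a * i + 1) := by
      have h1 := Dchain hp S hS1 hmono hcomm hpow i hi x hx a j hj y hy
      rw [← hz] at h1
      have e : engel y x (p ^ a) = (engel y x (p ^ a) * (⁅y, z⁆)⁻¹) * ⁅y, z⁆ := by group
      rw [e]
      exact mul_mem h1 hcz
    have ht2 : p ^ a ≤ t := by
      calc p ^ a = p ^ a * 1 := by ring
      _ ≤ p ^ a * m := Nat.mul_le_mul_left _ hm1
      _ = t := hfact
    have esplit : t = p ^ a + (t - p ^ a) := by omega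
    have eengel : engel y x t = engel (engel y x (p ^ a)) x (t - p ^ a) := by
      conv_lhs => rw [esplit]
      exact engel_add y x (p ^ a) (t - p ^ a)
    have hfin := engel_mem S hcomm hx (t - p ^ a) hw
    have eidx : (j + p ^ a * i + 1) + (t - p ^ a) * i = j + t * i + 1 := by
      have e5 : (t - p ^ a) * i = t * i - p ^ a * i := Nat.sub_mul t (p ^ a) i
      have e6 : p ^ a * i ≤ t * i := Nat.mul_le_mul_right i ht2
      omega
    rw [eengel]
    rw [eidx] at hfin
    exact hfin
end
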